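/- For every pair of positive integers m and d there exists a special set system β_{m,d} = {B; C_1, ..., C_m} on m subsets whose universe B satisfies |B| ≤ K · 2^{2d} · m² for some absolute constant K > 0 independent of m and d. -/

import Mathlib

lemma bern (b : ℕ) : ∀ n : ℕ, b^(n+1) + (n+1)*b^n ≤ (b+1)^(n+1) := by
  intro n
  induction n with
  | zero => simp
  | succ n ih =>
      calc b^(n+2) + (n+2)*b^(n+1)
          ≤ (b+1) * (b^(n+1) + (n+1)*b^n) := by ring_nf; nlinarith [pow_nonneg (Nat.zero_le b) n, Nat.pow_le_pow_left (Nat.le_succ b) n]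
        _ ≤ (b+1) * (b+1)^(n+1) := Nat.mul_le_mul_left _ ih
        _ = (b+1)^(n+2) := by ring

lemma two_mul_pred_pow (a : ℕ) (ha : 2 ≤ a) : 2 * (a-1)^a ≤ a^a := by
  obtain ⟨b, rfl⟩ : ∃ b, a = b + 1 := ⟨a - 1, by omega⟩
  simp only [Nat.add_sub_cancel]
  have h2 : b^(b+1) ≤ (b+1)*b^b := by
    calc b^(b+1) = b * b^b := by ring
      _ ≤ (b+1)*b^b := Nat.mul_le_mul_right _ (by omega)
  calc 2 * b^(b+1) = b^(b+1) + b^(b+1) := by ring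
    _ ≤ b^(b+1) + (b+1)*b^b := by omega
    _ ≤ (b+1)^(b+1) := bern b b

/-- Existence of a d-universal family of N boolean columns. -/
lemma exists_univ_family (m d : ℕ) (hm : 0 < m) (hd : 0 < d) :
    ∃ w : Fin (2^(min d m) * (2*m+1)) → Fin m → Bool,
      ∀ (I : Finset (Fin m)) (τ : Fin m → Bool), I.card ≤ d →
        ∃ j, ∀ i ∈ I, w j i = τ i := by
  set e := min d m with he
  set a := 2^e with ha
  set N := a * (2*m+1) with hN
  have hea : 2 ≤ a := by
    have : 1 ≤ e := by omega
    calc 2 = 2^1 := by norm_num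
      _ ≤ 2^e := Nat.pow_le_pow_right (by norm_num) this
  have hem : e ≤ m := Nat.min_le_right d m
  -- constraints
  classical
  set Cons : Finset (Finset (Fin m) × (Fin m → Bool)) :=
    Finset.univ.filter (fun c => c.1.card ≤ d) with hCons
  -- satisfying columns for a constraint
  set S : Finset (Fin m) × (Fin m → Bool) → Finset (Fin m → Bool) :=
    fun c => Fintype.piFinset (fun i => if i ∈ c.1 then ({c.2 i} : Finset Bool) else Finset.univ)
    with hS
  set T : Finset (Fin m) × (Fin m → Bool) → Finset (Fin m → Bool) :=
    fun c => Finset.univ \ S c with hT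
  set Bad : Finset (Fin m) × (Fin m → Bool) → Finset (Fin N → Fin m → Bool) :=
    fun c => Fintype.piFinset (fun _ => T c) with hBad
  have cardS : ∀ c ∈ Cons, 2^(m-e) ≤ (S c).card := by
    intro c hc
    have hc1 : c.1.card ≤ d := by simpa [hCons] using hc
    have hc2 : c.1.card ≤ m := by
      simpa using Finset.card_le_card (Finset.subset_univ c.1)
    have : (S c).card = 2^(m - c.1.card) := by
      rw [hS]
      rw [Fintype.card_piFinset]
      have : ∀ i : Fin m, (if i ∈ c.1 then ({c.2 i} : Finset Bool) else Finset.univ).card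
          = if i ∈ c.1 then 1 else 2 := by intro i; split <;> simp
      simp_rw [this]
      rw [Finset.prod_ite, Finset.prod_const, Finset.prod_const]
      simp [Finset.filter_mem_eq_inter, Finset.filter_not]
      rw [Finset.card_sdiff_of_subset (Finset.subset_univ c.1)]
      simp
    rw [this]
    exact Nat.pow_le_pow_right (by norm_num) (by omega)
  have cardT : ∀ c ∈ Cons, (T c).card ≤ 2^m - 2^(m-e) := by
    intro c hc
    have : (T c).card = 2^m - (S c).card := by
      rw [hT]
      simp only
      rw [Finset.card_sdiff_of_subset (Finset.subset_univ _)]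
      congr 1
      simp [Fintype.card_fun]
    rw [this]
    exact Nat.sub_le_sub_left (cardS c hc) _
  -- the key counting
  have main : (Cons.biUnion Bad).card < Fintype.card (Fin N → Fin m → Bool) := by
    have h1 : (Cons.biUnion Bad).card ≤ Cons.card * (2^m - 2^(m-e))^N := by
      calc (Cons.biUnion Bad).card ≤ ∑ c ∈ Cons, (Bad c).card := Finset.card_biUnion_le
        _ ≤ ∑ _c ∈ Cons, (2^m - 2^(m-e))^N := by
            apply Finset.sum_le_sum
            intro c hc
            have : (Bad c).card = (T c).card ^ N := by
              rw [hBad, Fintype.card_piFinset]; simp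
            rw [this]
            exact Nat.pow_le_pow_left (cardT c hc) N
        _ = Cons.card * (2^m - 2^(m-e))^N := by rw [Finset.sum_const, smul_eq_mul]
    have hConsCard : Cons.card ≤ 2^m * 2^m := by
      calc Cons.card ≤ Fintype.card (Finset (Fin m) × (Fin m → Bool)) := Finset.card_filter_le _ _ |>.trans (by simp)
        _ = 2^m * 2^m := by simp [Fintype.card_fun]
    have hsplit : 2^m - 2^(m-e) = 2^(m-e) * (a - 1) := by
      rw [Nat.mul_sub_one]
      congr 1
      rw [ha, ← pow_add]
      congr 1; omega
    have hkey : 2^(2*m+1) * (a-1)^N ≤ a^N := by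
      calc 2^(2*m+1) * (a-1)^N = (2 * (a-1)^a)^(2*m+1) := by
            rw [mul_pow, ← pow_mul, hN]
        _ ≤ (a^a)^(2*m+1) := Nat.pow_le_pow_left (two_mul_pred_pow a hea) _
        _ = a^N := by rw [← pow_mul, hN]
    have hstrict : 2^m * 2^m * (a-1)^N < 2^(2*m+1) * (a-1)^N := by
      have hpos : 0 < (a-1)^N := Nat.pow_pos (by omega)
      apply Nat.mul_lt_mul_of_lt_of_le _ (le_refl _) hpos
      calc 2^m * 2^m = 2^(2*m) := by rw [← pow_add]; ring_nf
        _ < 2^(2*m+1) := Nat.pow_lt_pow_right (by norm_num) (by omega)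
    have hfinal : Cons.card * (2^m - 2^(m-e))^N < (2^m)^N := by
      calc Cons.card * (2^m - 2^(m-e))^N
          = Cons.card * (2^(m-e))^N * (a-1)^N := by rw [hsplit, mul_pow]; ring
        _ ≤ 2^m * 2^m * (a-1)^N * (2^(m-e))^N := by
            have := Nat.mul_le_mul_right ((2^(m-e))^N * (a-1)^N) hConsCard
            calc Cons.card * (2^(m-e))^N * (a-1)^N
                = Cons.card * ((2^(m-e))^N * (a-1)^N) := by ring
              _ ≤ 2^m * 2^m * ((2^(m-e))^N * (a-1)^N) := this
              _ = 2^m * 2^m * (a-1)^N * (2^(m-e))^N := by ring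
        _ < 2^(2*m+1) * (a-1)^N * (2^(m-e))^N := by
            apply Nat.mul_lt_mul_of_lt_of_le hstrict (le_refl _)
            exact Nat.pow_pos (Nat.pow_pos (by norm_num))
        _ ≤ a^N * (2^(m-e))^N := Nat.mul_le_mul_right _ hkey
        _ = (2^m)^N := by
            rw [ha, ← mul_pow, ← pow_add]
            congr 2; omega
    calc (Cons.biUnion Bad).card ≤ Cons.card * (2^m - 2^(m-e))^N := h1
      _ < (2^m)^N := hfinal
      _ = Fintype.card (Fin N → Fin m → Bool) := by simp [Fintype.card_fun]
  -- extract a good w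
  have : ∃ w : Fin N → Fin m → Bool, w ∉ Cons.biUnion Bad := by
    by_contra h
    push_neg at h
    have : (Finset.univ : Finset (Fin N → Fin m → Bool)) ⊆ Cons.biUnion Bad :=
      fun w _ => h w
    have := Finset.card_le_card this
    simp only [Finset.card_univ] at this
    omega
  obtain ⟨w, hw⟩ := this
  refine ⟨w, ?_⟩
  intro I τ hI
  have hcI : (I, τ) ∈ Cons := by simp [hCons, hI]
  have : w ∉ Bad (I, τ) := fun hb => hw (Finset.mem_biUnion.mpr ⟨(I, τ), hcI, hb⟩)
  rw [hBad] at this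
  simp only [Fintype.mem_piFinset] at this
  push_neg at this
  obtain ⟨j, hj⟩ := this
  refine ⟨j, ?_⟩
  have : w j ∈ S (I, τ) := by
    rw [hT] at hj
    simp only [Finset.mem_sdiff, Finset.mem_univ, true_and, not_not] at hj
    exact hj
  rw [hS] at this
  simp only [Fintype.mem_piFinset] at this
  intro i hi
  have := this i
  simp [hi] at this
  exact this

lemma exists_univ_family' (m d : ℕ) (hm : 0 < m) (hd : 0 < d) :
    ∃ (N : ℕ) (w : Fin N → Fin m → Bool),
      N ≤ 3 * 2^(2*d) * m^2 ∧
      (∀ (I : Finset (Fin m)) (τ : Fin m → Bool), I.card ≤ d →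
        ∃ j, ∀ i ∈ I, w j i = τ i) := by
  obtain ⟨w, hw⟩ := exists_univ_family m d hm hd
  refine ⟨2^(min d m) * (2*m+1), w, ?_, hw⟩
  have h1 : 2^(min d m) ≤ 2^(2*d) := Nat.pow_le_pow_right (by norm_num) (by omega)
  have h2 : 2*m+1 ≤ 3*m^2 := by nlinarith
  calc 2^(min d m) * (2*m+1) ≤ 2^(2*d) * (3*m^2) := Nat.mul_le_mul h1 h2
    _ = 3 * 2^(2*d) * m^2 := by ring


/-- For every pair of positive integers `m` and `d` there exists a
special set system `β_{m,d} = {B; C_1, ..., C_m}` on `m` subsets whose universe `B`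
satisfies `|B| ≤ K · 2^(2d) · m²` for some absolute constant `K > 0` independent of
`m` and `d`.  A special set system consists of a finite universe `B` together with
subsets `C i ⊆ B` such that no union of at most `d` sets, each of which is some
`C i` or its complement `B \ C i` (at most one per index), equals `B`. -/
theorem special_set_system_exists_quadratic :
    ∃ K : ℝ, 0 < K ∧
      ∀ m d : ℕ, 0 < m → 0 < d →
        ∃ (B : Finset ℕ) (C : Fin m → Finset ℕ),
          (∀ i, C i ⊆ B) ∧
          (∀ (I : Finset (Fin m)) (D : Fin m → Finset ℕ),
            I.card ≤ d → (∀ i ∈ I, D i = C i ∨ D i = B \ C i) →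
            I.biUnion D ≠ B) ∧
          (B.card : ℝ) ≤ K * 2 ^ (2 * d) * (m : ℝ) ^ 2 := by
  classical
  refine ⟨3, by norm_num, ?_⟩
  intro m d hm hd
  obtain ⟨N, w, hNle, hw⟩ := exists_univ_family' m d hm hd
  refine ⟨(Finset.univ : Finset (Fin N)).image Fin.val,
    fun i => (Finset.univ.filter (fun j : Fin N => w j i = true)).image Fin.val, ?_, ?_, ?_⟩
  · intro i
    exact Finset.image_subset_image (Finset.filter_subset _ _)
  · intro I D hI hD hEq
    set B := (Finset.univ : Finset (Fin N)).image Fin.val with hB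
    set C := fun i => ((Finset.univ.filter (fun j : Fin N => w j i = true)).image Fin.val) with hC
    have memC : ∀ (i : Fin m) (j : Fin N), (j : ℕ) ∈ C i ↔ w j i = true := by
      intro i j
      simp only [hC, Finset.mem_image, Finset.mem_filter, Finset.mem_univ, true_and]
      constructor
      · rintro ⟨j', hj', hval⟩
        have : j' = j := Fin.val_injective hval
        rwa [this] at hj'
      · intro h; exact ⟨j, h, rfl⟩
    have memB : ∀ j : Fin N, (j : ℕ) ∈ B := by
      intro j; simp [hB]
    set τ : Fin m → Bool := fun i => if D i = C i then false else true with hτ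
    obtain ⟨j, hj⟩ := hw I τ hI
    have hnot : ∀ i ∈ I, (j : ℕ) ∉ D i := by
      intro i hi
      have hji := hj i hi
      by_cases hcase : D i = C i
      · have : τ i = false := by simp [hτ, hcase]
        rw [this] at hji
        rw [hcase]
        intro hmem
        rw [memC i j] at hmem
        rw [hji] at hmem
        exact Bool.false_ne_true hmem
      · have hDi : D i = B \ C i := (hD i hi).resolve_left hcase
        have : τ i = true := by simp [hτ, hcase]
        rw [this] at hji
        have hjC : (j : ℕ) ∈ C i := (memC i j).mpr hji
        rw [hDi]
        simp [hjC]
    have hjB : (j : ℕ) ∈ B := memB j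
    rw [← hEq] at hjB
    obtain ⟨i, hi, hmem⟩ := Finset.mem_biUnion.mp hjB
    exact hnot i hi hmem
  · have hcard : ((Finset.univ : Finset (Fin N)).image Fin.val).card = N := by
      rw [Finset.card_image_of_injective _ Fin.val_injective, Finset.card_univ, Fintype.card_fin]
    rw [hcard]
    calc (N : ℝ) ≤ ((3 * 2^(2*d) * m^2 : ℕ) : ℝ) := Nat.cast_le.mpr hNle
      _ = 3 * 2^(2*d) * (m:ℝ)^2 := by push_cast; ring
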